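/- Let X be a real-valued random variable with cumulative distribution function F. Then the integral over R of min(F(x), 1 - F(x^-)) dx is finite if and only if E|X| < ∞, where F(x^-) denotes the left limit of F at x. -/

import Mathlib

open MeasureTheory Set Filter
open scoped ENNReal

lemma half_le_min_of {P : Measure ℝ} [IsProbabilityMeasure P] {a b : ℝ≥0∞}
    (ha : a ≤ 1) (hb : 1/2 ≤ b) : a ≤ 2 * min a b := by
  have h1 : a / 2 ≤ min a b := by
    refine le_min ENNReal.half_le_self (le_trans ?_ hb)
    exact ENNReal.div_le_div_right ha 2
  calc a = 2 * (a / 2) := by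
        rw [ENNReal.mul_div_cancel two_ne_zero ENNReal.ofNat_ne_top]
    _ ≤ 2 * min a b := mul_le_mul_right h1 2

/-- For a real random variable `X ~ P` with cdf `F x = P(Iic x)`, the integral over `ℝ` of the
univariate halfspace depth `min (F x) (1 - F (x⁻))` is finite if and only if `E|X| < ∞`. -/
theorem halfspace_dispersion_finite_iff_integrable
    (P : Measure ℝ) [IsProbabilityMeasure P] :
    (∫⁻ x : ℝ, min (P (Iic x)) (1 - P (Iio x))) < ⊤ ↔
      Integrable (fun x : ℝ => x) P := by
  have hIci : ∀ x : ℝ, 1 - P (Iio x) = P (Ici x) := fun x => by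
    rw [← compl_Iio, measure_compl measurableSet_Iio (measure_ne_top P _), measure_univ]
  simp_rw [hIci]
  have hf : Measurable fun x : ℝ => P (Iic x) :=
    Monotone.measurable fun a b hab => measure_mono (Iic_subset_Iic.2 hab)
  have hg : Measurable fun x : ℝ => P (Ici x) :=
    Antitone.measurable fun a b hab => measure_mono (Ici_subset_Ici.2 hab)
  have hmin : Measurable fun x : ℝ => min (P (Iic x)) (P (Ici x)) := hf.min hg
  -- The key identity: ∫⁻ |x| dP = ∫_{(-∞,0)} F + ∫_{(0,∞)} (1-F⁻)
  have key : ∫⁻ x, ‖x‖ₑ ∂P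
      = (∫⁻ x in Iio (0:ℝ), P (Iic x)) + ∫⁻ t in Ioi (0:ℝ), P (Ici t) := by
    have h1 : ∫⁻ x, ‖x‖ₑ ∂P = ∫⁻ t in Ioi (0:ℝ), P {a : ℝ | t ≤ |a|} := by
      simp_rw [Real.enorm_eq_ofReal_abs]
      exact lintegral_eq_lintegral_meas_le P (Eventually.of_forall fun x => abs_nonneg x)
        measurable_abs.aemeasurable
    have h2 : ∫⁻ t in Ioi (0:ℝ), P {a : ℝ | t ≤ |a|}
        = ∫⁻ t in Ioi (0:ℝ), (P (Iic (-t)) + P (Ici t)) := by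
      refine setLIntegral_congr_fun measurableSet_Ioi (fun t ht => ?_)
      have ht0 : (0:ℝ) < t := ht
      have hset : {a : ℝ | t ≤ |a|} = Iic (-t) ∪ Ici t := by
        ext a
        simp only [mem_setOf_eq, mem_union, mem_Iic, mem_Ici, le_abs, le_neg]
        tauto
      have hdisj : Disjoint (Iic (-t)) (Ici t) := by
        rw [Set.disjoint_left]
        intro a ha hb
        simp only [mem_Iic] at ha
        simp only [mem_Ici] at hb
        linarith
      rw [hset, measure_union hdisj measurableSet_Ici]
    have h3 : ∫⁻ t in Ioi (0:ℝ), (P (Iic (-t)) + P (Ici t))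
        = (∫⁻ t in Ioi (0:ℝ), P (Iic (-t))) + ∫⁻ t in Ioi (0:ℝ), P (Ici t) :=
      lintegral_add_left (hf.comp measurable_neg) _
    have h4 : ∫⁻ t in Ioi (0:ℝ), P (Iic (-t)) = ∫⁻ x in Iio (0:ℝ), P (Iic x) := by
      have hmp := Measure.measurePreserving_neg (volume : Measure ℝ)
      have hsl := setLIntegral_map (μ := (volume : Measure ℝ))
        (f := fun x : ℝ => P (Iic x)) (g := Neg.neg) (s := Iio (0:ℝ)) measurableSet_Iio hf measurable_neg
      rw [hmp.map_eq] at hsl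
      have hpre : (Neg.neg : ℝ → ℝ) ⁻¹' (Iio 0) = Ioi 0 := by
        ext x; simp [neg_lt_zero]
      rw [hpre] at hsl
      exact hsl.symm
    rw [h1, h2, h3, h4]
  have hInt : Integrable (fun x : ℝ => x) P ↔
      (∫⁻ x in Iio (0:ℝ), P (Iic x)) + (∫⁻ t in Ioi (0:ℝ), P (Ici t)) < ⊤ := by
    rw [← key]
    constructor
    · exact fun h => h.2
    · exact fun h => ⟨measurable_id.aestronglyMeasurable, h⟩
  rw [hInt]
  set I := ∫⁻ x : ℝ, min (P (Iic x)) (P (Ici x)) with hI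
  constructor
  · -- I < ⊤ → tails finite
    intro hIlt
    -- find a with F(a) ≥ 1/2 and b with 1 - F(b⁻) ≥ 1/2
    have h12 : (1/2 : ℝ≥0∞) < 1 := ENNReal.half_lt_self one_ne_zero ENNReal.one_ne_top
    obtain ⟨a, ha⟩ : ∃ a : ℝ, 1/2 ≤ P (Iic a) := by
      have := (tendsto_measure_Iic_atTop P).eventually_const_le (by rwa [measure_univ])
      exact this.exists
    obtain ⟨b, hb⟩ : ∃ b : ℝ, 1/2 ≤ P (Ici b) := by
      have := (tendsto_measure_Ici_atBot P).eventually_const_le (by rwa [measure_univ])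
      exact this.exists
    have h2I : 2 * I < ⊤ := ENNReal.mul_lt_top ENNReal.ofNat_lt_top hIlt
    -- Left tail
    have hleft : (∫⁻ x in Iio (0:ℝ), P (Iic x)) < ⊤ := by
      set c := min b 0 with hc
      have hc0 : c ≤ 0 := min_le_right _ _
      have hsplit : Iio (0:ℝ) = Iio c ∪ Ico c 0 := (Iio_union_Ico_eq_Iio hc0).symm
      have hdisj : Disjoint (Iio c) (Ico c 0) := by
        rw [Set.disjoint_left]; intro x hx hx'
        exact absurd hx'.1 (not_le.2 hx)
      rw [hsplit, lintegral_union measurableSet_Ico hdisj]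
      have hA : (∫⁻ x in Iio c, P (Iic x)) ≤ 2 * I := by
        calc (∫⁻ x in Iio c, P (Iic x))
            ≤ ∫⁻ x in Iio c, 2 * min (P (Iic x)) (P (Ici x)) := by
              refine setLIntegral_mono (hmin.const_mul 2) fun x hx => ?_
              refine half_le_min_of (P := P) prob_le_one ?_
              exact le_trans hb (measure_mono (Ici_subset_Ici.2
                (le_of_lt (lt_of_lt_of_le hx (min_le_left b 0)))))
          _ ≤ ∫⁻ x, 2 * min (P (Iic x)) (P (Ici x)) := setLIntegral_le_lintegral _ _
          _ = 2 * I := lintegral_const_mul 2 hmin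
      have hB : (∫⁻ x in Ico c 0, P (Iic x)) < ⊤ := by
        calc (∫⁻ x in Ico c 0, P (Iic x)) ≤ ∫⁻ _ in Ico c 0, (1:ℝ≥0∞) :=
              setLIntegral_mono measurable_const fun x _ => prob_le_one
          _ = volume (Ico c 0) := by simp
          _ < ⊤ := measure_Ico_lt_top
      exact ENNReal.add_lt_top.2 ⟨lt_of_le_of_lt hA h2I, hB⟩
    -- Right tail
    have hright : (∫⁻ t in Ioi (0:ℝ), P (Ici t)) < ⊤ := by
      set d := max a 0 with hd
      have hd0 : (0:ℝ) ≤ d := le_max_right _ _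
      have hsplit : Ioi (0:ℝ) = Ioc 0 d ∪ Ioi d := (Ioc_union_Ioi_eq_Ioi hd0).symm
      have hdisj : Disjoint (Ioc (0:ℝ) d) (Ioi d) := by
        rw [Set.disjoint_left]; intro x hx hx'
        exact absurd hx.2 (not_le.2 hx')
      rw [hsplit, lintegral_union measurableSet_Ioi hdisj]
      have hA : (∫⁻ x in Ioi d, P (Ici x)) ≤ 2 * I := by
        calc (∫⁻ x in Ioi d, P (Ici x))
            ≤ ∫⁻ x in Ioi d, 2 * min (P (Iic x)) (P (Ici x)) := by
              refine setLIntegral_mono (hmin.const_mul 2) fun x hx => ?_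
              have h1 : 1/2 ≤ P (Iic x) :=
                le_trans ha (measure_mono (Iic_subset_Iic.2
                  (le_of_lt (lt_of_le_of_lt (le_max_left a 0) hx))))
              have := half_le_min_of (P := P) (a := P (Ici x)) (b := P (Iic x))
                prob_le_one h1
              rwa [min_comm] at this
          _ ≤ ∫⁻ x, 2 * min (P (Iic x)) (P (Ici x)) := setLIntegral_le_lintegral _ _
          _ = 2 * I := lintegral_const_mul 2 hmin
      have hB : (∫⁻ x in Ioc (0:ℝ) d, P (Ici x)) < ⊤ := by
        calc (∫⁻ x in Ioc (0:ℝ) d, P (Ici x)) ≤ ∫⁻ _ in Ioc (0:ℝ) d, (1:ℝ≥0∞) :=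
              setLIntegral_mono measurable_const fun x _ => prob_le_one
          _ = volume (Ioc (0:ℝ) d) := by simp
          _ < ⊤ := measure_Ioc_lt_top
      exact ENNReal.add_lt_top.2 ⟨hB, lt_of_le_of_lt hA h2I⟩
    exact ENNReal.add_lt_top.2 ⟨hleft, hright⟩
  · -- tails finite → I < ⊤
    intro h
    rw [ENNReal.add_lt_top] at h
    have hsplit : I = (∫⁻ x in Iio (0:ℝ), min (P (Iic x)) (P (Ici x)))
        + ∫⁻ x in Ici (0:ℝ), min (P (Iic x)) (P (Ici x)) := by
      rw [hI, ← lintegral_add_compl _ measurableSet_Iio, compl_Iio]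
    rw [hsplit]
    refine ENNReal.add_lt_top.2 ⟨?_, ?_⟩
    · exact lt_of_le_of_lt
        (setLIntegral_mono hf fun x _ => min_le_left _ _) h.1
    · have hae : (∫⁻ x in Ici (0:ℝ), min (P (Iic x)) (P (Ici x)))
          = ∫⁻ x in Ioi (0:ℝ), min (P (Iic x)) (P (Ici x)) :=
        (setLIntegral_congr (Ioi_ae_eq_Ici (α := ℝ)).symm)
      rw [hae]
      exact lt_of_le_of_lt
        (setLIntegral_mono hg fun x _ => min_le_right _ _) h.2
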